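/- Let W_n be the wheel graph on n+1 vertices and C_n the cycle on n vertices. The linear-strand Betti numbers satisfy β_{i,i+1}(W_n) = β_{i,i+1}(C_n) + β_{i-1,i}(C_n) + C(n,i). -/

import Mathlib

set_option linter.unusedSectionVars false
set_option synthInstance.maxHeartbeats 1000000
set_option maxHeartbeats 1000000


open Finset

/-- The faces of the independence complex of a graph `G`: the finite independent sets. -/
def indepFaces {V : Type} (G : SimpleGraph V) : Set (Finset V) :=
  {s | ∀ a ∈ s, ∀ b ∈ s, ¬G.Adj a b}

/-- The space of simplicial `ℚ`-chains of the independence complex of `G` spanned by the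
faces with exactly `i` vertices (for `i = 0` this is spanned by the empty face, so the
associated homology is reduced homology). -/
abbrev chains {V : Type} (G : SimpleGraph V) (i : ℕ) : Type :=
  {s : Finset V // s ∈ indepFaces G ∧ s.card = i} →₀ ℚ

/-- The simplicial boundary map of the independence complex of `G`, from chains on faces with
`i+1` vertices to chains on faces with `i` vertices, with the usual alternating signs coming
from the linear order on the vertices. -/
noncomputable def bdry {V : Type} [DecidableEq V] [LinearOrder V] (G : SimpleGraph V)
    (i : ℕ) : chains G (i + 1) →ₗ[ℚ] chains G i :=
  Finsupp.lsum ℚ fun s => LinearMap.toSpanSingleton ℚ _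
    (∑ a ∈ s.1.attach,
      ((-1 : ℚ) ^ (s.1.filter fun b => b < a.1).card) •
        Finsupp.single
          ⟨s.1.erase a.1,
            ⟨fun x hx y hy =>
              s.2.1 x (Finset.mem_of_mem_erase hx) y (Finset.mem_of_mem_erase hy),
             by simp [Finset.card_erase_of_mem a.2, s.2.2]⟩⟩
          (1 : ℚ))

/-- The `j`-th reduced simplicial homology (with `ℚ`-coefficients) of the independence
complex of `G`: cycles supported on faces with `j+1` vertices modulo boundaries. -/
noncomputable abbrev redHomology {V : Type} [DecidableEq V] [LinearOrder V] (G : SimpleGraph V)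
    (j : ℕ) : Type :=
  LinearMap.ker (bdry G j) ⧸
    (LinearMap.range (bdry G (j + 1))).comap (LinearMap.ker (bdry G j)).subtype

/-- The cycle graph on `n` vertices, with edges `{i, i+1 mod n}`. -/
def cycleGraph (n : ℕ) : SimpleGraph (Fin n) :=
  SimpleGraph.fromRel fun i j => ((i : ℕ) + 1) % n = (j : ℕ)

/-- The wheel graph on `n+1` vertices: vertex `0` is the center, adjacent to every other
vertex, and the vertices `1,…,n` form an `n`-cycle. -/
def wheelGraph (n : ℕ) : SimpleGraph (Fin (n + 1)) :=
  SimpleGraph.fromRel fun a b =>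
    a = 0 ∨ ∃ i j : Fin n, a = i.succ ∧ b = j.succ ∧ ((i : ℕ) + 1) % n = (j : ℕ)

/-- The graded Betti numbers of the Stanley–Reisner ring of the independence complex of `G`
(i.e. of the edge ideal of `G`), given by Hochster's formula:
`β_{i,j} = Σ_{S ⊆ V, |S| = j} dim_ℚ H̃_{j-i-1}(Δ_{G[S]})`. -/
noncomputable def bettiNumber {V : Type} [Fintype V] [DecidableEq V] [LinearOrder V]
    (G : SimpleGraph V) (i j : ℕ) : ℕ :=
  ∑ S ∈ Finset.univ.filter fun S : Finset V => S.card = j,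
    Module.finrank ℚ (redHomology (G.induce (S : Set V)) (j - i - 1))


section Helpers

variable {V : Type} [DecidableEq V] [LinearOrder V]

lemma singleton_indep (G : SimpleGraph V) (v : V) : ({v} : Finset V) ∈ indepFaces G := by
  intro a ha b hb
  simp only [Finset.mem_singleton] at ha hb
  subst ha; subst hb
  exact G.irrefl

lemma empty_indep (G : SimpleGraph V) : (∅ : Finset V) ∈ indepFaces G := by
  intro a ha; simp at ha

/-- The basis chain of a singleton face. -/
noncomputable def vert (G : SimpleGraph V) (v : V) : chains G 1 :=
  Finsupp.single ⟨{v}, singleton_indep G v, Finset.card_singleton v⟩ 1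

/-- The basis chain of the empty face. -/
noncomputable def emptyChain (G : SimpleGraph V) : chains G 0 :=
  Finsupp.single ⟨∅, empty_indep G, Finset.card_empty⟩ 1

open scoped Classical in
/-- The basis chain of a face, or `0` if it is not a face. -/
noncomputable def faceSingle (G : SimpleGraph V) (i : ℕ) (s : Finset V) : chains G i :=
  if h : s ∈ indepFaces G ∧ s.card = i then Finsupp.single ⟨s, h⟩ 1 else 0

lemma faceSingle_pos (G : SimpleGraph V) (i : ℕ) (s : Finset V)
    (h : s ∈ indepFaces G ∧ s.card = i) :
    faceSingle G i s = Finsupp.single ⟨s, h⟩ 1 := by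
  rw [faceSingle, dif_pos h]

lemma bdry_single (G : SimpleGraph V) (i : ℕ) (t : Finset V)
    (h : t ∈ indepFaces G ∧ t.card = i + 1) (c : ℚ) :
    bdry G i (Finsupp.single ⟨t, h⟩ c) =
      c • ∑ a ∈ t, ((-1 : ℚ) ^ (t.filter fun b => b < a).card) • faceSingle G i (t.erase a) := by
  rw [bdry, Finsupp.lsum_single, LinearMap.toSpanSingleton_apply]
  congr 1
  rw [← Finset.sum_attach t (fun a => ((-1 : ℚ) ^ (t.filter fun b => b < a).card) •
        faceSingle G i (t.erase a))]
  apply Finset.sum_congr rfl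
  intro a _
  congr 1
  rw [faceSingle_pos]



lemma pair_indep (G : SimpleGraph V) {a b : V} (hab : a ≠ b) (hn : ¬ G.Adj a b) :
    ({a, b} : Finset V) ∈ indepFaces G := by
  intro x hx y hy
  simp only [Finset.mem_insert, Finset.mem_singleton] at hx hy
  rcases hx with rfl | rfl <;> rcases hy with rfl | rfl
  · exact G.irrefl
  · exact hn
  · exact fun h => hn h.symm
  · exact G.irrefl

lemma bdry_vert (G : SimpleGraph V) (v : V) :
    bdry G 0 (vert G v) = emptyChain G := by
  rw [vert, bdry_single, Finset.sum_singleton, Finset.filter_singleton]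
  rw [if_neg (lt_irrefl v), Finset.erase_singleton]
  rw [faceSingle_pos G 0 ∅ ⟨empty_indep G, Finset.card_empty⟩]
  simp [emptyChain]

lemma bdry_pair (G : SimpleGraph V) {a b : V} (hab : a < b) (hn : ¬ G.Adj a b) (c : ℚ) :
    bdry G 1 (Finsupp.single ⟨{a, b}, pair_indep G hab.ne hn, Finset.card_pair hab.ne⟩ c) =
      c • (vert G b - vert G a) := by
  rw [bdry_single, Finset.sum_pair hab.ne]
  have h1 : ({a, b} : Finset V).filter (fun x => x < a) = ∅ := by
    ext x
    simp only [Finset.mem_filter, Finset.mem_insert, Finset.mem_singleton,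
      Finset.notMem_empty, iff_false, not_and]
    rintro (rfl | rfl)
    · exact lt_irrefl _
    · exact fun h => absurd (hab.trans h) (lt_irrefl _)
  have h2 : ({a, b} : Finset V).filter (fun x => x < b) = {a} := by
    ext x
    simp only [Finset.mem_filter, Finset.mem_insert, Finset.mem_singleton]
    constructor
    · rintro ⟨rfl | rfl, h⟩
      · rfl
      · exact absurd h (lt_irrefl _)
    · rintro rfl; exact ⟨Or.inl rfl, hab⟩
  have h3 : ({a, b} : Finset V).erase a = {b} := by
    rw [Finset.erase_insert]
    simp [hab.ne]
  have h4 : ({a, b} : Finset V).erase b = {a} := by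
    rw [Finset.pair_comm, Finset.erase_insert]
    simp [hab.ne']
  rw [h1, h2, h3, h4]
  rw [faceSingle_pos G 1 {b} ⟨singleton_indep G b, Finset.card_singleton b⟩,
    faceSingle_pos G 1 {a} ⟨singleton_indep G a, Finset.card_singleton a⟩]
  simp [vert, smul_sub]
  rw [sub_eq_add_neg]

/-- Generators of the image of the degree-1 boundary. -/
def gens (G : SimpleGraph V) : Set (chains G 1) :=
  {x | ∃ a b : V, a < b ∧ ¬ G.Adj a b ∧ x = vert G b - vert G a}

lemma range_bdry_one (G : SimpleGraph V) :
    LinearMap.range (bdry G 1) = Submodule.span ℚ (gens G) := by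
  apply le_antisymm
  · rintro x ⟨y, rfl⟩
    induction y using Finsupp.induction_linear with
    | zero => simp
    | add f g hf hg => rw [map_add]; exact Submodule.add_mem _ hf hg
    | single t c =>
      obtain ⟨s, hs⟩ := t
      obtain ⟨a, b, hab, hpair⟩ := Finset.card_eq_two.mp hs.2
      rcases lt_or_gt_of_ne hab with hlt | hlt
      · have hn : ¬ G.Adj a b := hs.1 a (by simp [hpair]) b (by simp [hpair])
        have : (⟨s, hs⟩ : {s : Finset V // s ∈ indepFaces G ∧ s.card = 2}) =
            ⟨{a, b}, pair_indep G hab hn, Finset.card_pair hab⟩ := Subtype.ext hpair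
        rw [this, bdry_pair G hlt hn]
        exact Submodule.smul_mem _ _ (Submodule.subset_span ⟨a, b, hlt, hn, rfl⟩)
      · have hn : ¬ G.Adj b a := hs.1 b (by simp [hpair]) a (by simp [hpair])
        have : (⟨s, hs⟩ : {s : Finset V // s ∈ indepFaces G ∧ s.card = 2}) =
            ⟨{b, a}, pair_indep G hab.symm hn, Finset.card_pair hab.symm⟩ :=
          Subtype.ext (hpair.trans (Finset.pair_comm a b))
        rw [this, bdry_pair G hlt hn]
        exact Submodule.smul_mem _ _ (Submodule.subset_span ⟨b, a, hlt, hn, rfl⟩)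
  · rw [Submodule.span_le]
    rintro x ⟨a, b, hlt, hn, rfl⟩
    exact ⟨Finsupp.single ⟨{a, b}, pair_indep G hlt.ne hn, Finset.card_pair hlt.ne⟩ 1,
      by rw [bdry_pair G hlt hn, one_smul]⟩

instance chainsFinite (G : SimpleGraph V) [Finite V] (i : ℕ) :
    Module.Finite ℚ (chains G i) := by
  have : Finite {s : Finset V // s ∈ indepFaces G ∧ s.card = i} := by
    have : Fintype V := Fintype.ofFinite V
    infer_instance
  infer_instance

lemma finrank_chains_one (G : SimpleGraph V) [Fintype V] :
    Module.finrank ℚ (chains G 1) = Fintype.card V := by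
  have : Fintype {s : Finset V // s ∈ indepFaces G ∧ s.card = 1} := Fintype.ofFinite _
  rw [Module.finrank_finsupp_self]
  apply Fintype.card_congr
  apply Equiv.symm
  refine Equiv.ofBijective (fun v => ⟨{v}, singleton_indep G v, Finset.card_singleton v⟩) ?_
  constructor
  · intro a b hab
    have := congrArg (fun t => t.1) hab
    simpa using this
  · rintro ⟨s, hs⟩
    obtain ⟨v, rfl⟩ := Finset.card_eq_one.mp hs.2
    exact ⟨v, rfl⟩

lemma unique_face_zero (G : SimpleGraph V) :
    ∀ s : {s : Finset V // s ∈ indepFaces G ∧ s.card = 0},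
      s = ⟨∅, empty_indep G, Finset.card_empty⟩ :=
  fun s => Subtype.ext (Finset.card_eq_zero.mp s.2.2)

lemma finrank_chains_zero (G : SimpleGraph V) [Fintype V] :
    Module.finrank ℚ (chains G 0) = 1 := by
  have : Fintype {s : Finset V // s ∈ indepFaces G ∧ s.card = 0} := Fintype.ofFinite _
  rw [Module.finrank_finsupp_self]
  rw [Fintype.card_eq_one_iff]
  exact ⟨⟨∅, empty_indep G, Finset.card_empty⟩, fun s => unique_face_zero G s⟩

lemma bdry_zero_surjective (G : SimpleGraph V) [Nonempty V] :
    Function.Surjective (bdry G 0) := by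
  intro x
  obtain ⟨v⟩ := ‹Nonempty V›
  refine ⟨(x ⟨∅, empty_indep G, Finset.card_empty⟩) • vert G v, ?_⟩
  rw [map_smul, bdry_vert]
  ext t
  rw [unique_face_zero G t]
  simp [emptyChain]

lemma range_le_ker (G : SimpleGraph V) :
    LinearMap.range (bdry G 1) ≤ LinearMap.ker (bdry G 0) := by
  rw [range_bdry_one, Submodule.span_le]
  rintro x ⟨a, b, hlt, hn, rfl⟩
  rw [SetLike.mem_coe, LinearMap.mem_ker, map_sub, bdry_vert, bdry_vert, sub_self]

lemma finrank_formula (G : SimpleGraph V) [Fintype V] [Nonempty V] :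
    Module.finrank ℚ (redHomology G 0) +
      Module.finrank ℚ (LinearMap.range (bdry G 1)) + 1 = Fintype.card V := by
  have hker : Module.finrank ℚ (LinearMap.ker (bdry G 0)) + 1 = Fintype.card V := by
    have h1 := LinearMap.finrank_range_add_finrank_ker (bdry G 0)
    rw [finrank_chains_one] at h1
    rw [LinearMap.range_eq_top.mpr (bdry_zero_surjective G), finrank_top,
      finrank_chains_zero] at h1
    omega
  have hN : Module.finrank ℚ
      ((LinearMap.range (bdry G 1)).comap (LinearMap.ker (bdry G 0)).subtype) =
      Module.finrank ℚ (LinearMap.range (bdry G 1)) :=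
    (Submodule.comapSubtypeEquivOfLe (range_le_ker G)).finrank_eq
  have hq := Submodule.finrank_quotient_add_finrank
    ((LinearMap.range (bdry G 1)).comap (LinearMap.ker (bdry G 0)).subtype)
  rw [hN] at hq
  rw [← hker, ← hq]

section Transport

variable {W : Type} [DecidableEq W] [LinearOrder W]

/-- The map on degree-1 faces induced by an injective graph map. -/
noncomputable def faceMap (G : SimpleGraph V) (H : SimpleGraph W) (φ : W → V)
    (hinj : Function.Injective φ) (hadj : ∀ a b : W, H.Adj a b ↔ G.Adj (φ a) (φ b)) :
    {s : Finset W // s ∈ indepFaces H ∧ s.card = 1} →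
      {s : Finset V // s ∈ indepFaces G ∧ s.card = 1} :=
  fun s => ⟨s.1.image φ, by
    rintro x hx y hy
    simp only [Finset.mem_image] at hx hy
    obtain ⟨a, ha, rfl⟩ := hx
    obtain ⟨b, hb, rfl⟩ := hy
    exact fun h => s.2.1 a ha b hb ((hadj a b).mpr h),
    by rw [Finset.card_image_of_injective _ hinj, s.2.2]⟩

lemma finrank_range_bdry_eq (G : SimpleGraph V) (H : SimpleGraph W) (φ : W → V)
    (hinj : Function.Injective φ) (hadj : ∀ a b : W, H.Adj a b ↔ G.Adj (φ a) (φ b))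
    (hcov : ∀ a b : V, a ≠ b → ¬ G.Adj a b → (∃ a', φ a' = a) ∧ ∃ b', φ b' = b) :
    Module.finrank ℚ (LinearMap.range (bdry G 1)) =
      Module.finrank ℚ (LinearMap.range (bdry H 1)) := by
  set m := faceMap G H φ hinj hadj with hm
  have hminj : Function.Injective m := by
    intro s t hst
    apply Subtype.ext
    have : s.1.image φ = t.1.image φ := congrArg (fun u => u.1) hst
    exact Finset.image_injective hinj this
  set T : chains H 1 →ₗ[ℚ] chains G 1 := Finsupp.lmapDomain ℚ ℚ m with hT
  have hTinj : Function.Injective T := Finsupp.mapDomain_injective hminj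
  have hTvert : ∀ w : W, T (vert H w) = vert G (φ w) := by
    intro w
    rw [hT, vert, Finsupp.lmapDomain_apply, Finsupp.mapDomain_single]
    congr 1
  have key : Submodule.map T (LinearMap.range (bdry H 1)) = LinearMap.range (bdry G 1) := by
    rw [range_bdry_one, range_bdry_one, Submodule.map_span]
    apply le_antisymm
    · rw [Submodule.span_le]
      rintro x ⟨y, ⟨a, b, hlt, hn, rfl⟩, rfl⟩
      have hne : φ a ≠ φ b := fun h => hlt.ne (hinj h)
      have hn' : ¬ G.Adj (φ a) (φ b) := fun h => hn ((hadj a b).mpr h)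
      rw [map_sub, hTvert, hTvert]
      rcases lt_or_gt_of_ne hne with h | h
      · exact Submodule.subset_span ⟨φ a, φ b, h, hn', rfl⟩
      · rw [show vert G (φ b) - vert G (φ a) = -(vert G (φ a) - vert G (φ b)) from
          (neg_sub _ _).symm]
        exact Submodule.neg_mem _ (Submodule.subset_span
          ⟨φ b, φ a, h, fun h' => hn' h'.symm, rfl⟩)
    · rw [Submodule.span_le]
      rintro x ⟨a, b, hlt, hn, rfl⟩
      obtain ⟨⟨a', rfl⟩, ⟨b', rfl⟩⟩ := hcov a b hlt.ne hn
      have hne : a' ≠ b' := fun h => hlt.ne (congrArg φ h)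
      have hn' : ¬ H.Adj a' b' := fun h => hn ((hadj a' b').mp h)
      rcases lt_or_gt_of_ne hne with h | h
      · refine Submodule.subset_span ⟨vert H b' - vert H a', ⟨a', b', h, hn', rfl⟩, ?_⟩
        rw [map_sub, hTvert, hTvert]
      · rw [show vert G (φ b') - vert G (φ a') = -(vert G (φ a') - vert G (φ b')) from
          (neg_sub _ _).symm]
        refine Submodule.neg_mem _ (Submodule.subset_span
          ⟨vert H a' - vert H b', ⟨b', a', h, fun h' => hn' h'.symm, rfl⟩, ?_⟩)
        rw [map_sub, hTvert, hTvert]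
  rw [← key]
  exact ((LinearMap.range (bdry H 1)).equivMapOfInjective T hTinj).finrank_eq.symm

end Transport

section Graphs

lemma wheel_adj_zero {n : ℕ} (b : Fin (n + 1)) (hb : b ≠ 0) : (wheelGraph n).Adj 0 b := by
  rw [wheelGraph, SimpleGraph.fromRel_adj]
  exact ⟨fun h => hb h.symm, Or.inl (Or.inl rfl)⟩

lemma wheel_adj_succ {n : ℕ} (p q : Fin n) :
    (wheelGraph n).Adj p.succ q.succ ↔ (cycleGraph n).Adj p q := by
  rw [wheelGraph, cycleGraph, SimpleGraph.fromRel_adj, SimpleGraph.fromRel_adj]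
  simp only [Fin.succ_inj, ne_eq, Fin.succ_ne_zero, false_or]
  constructor
  · rintro ⟨hne, h | h⟩
    · obtain ⟨i, j, hi, hj, hij⟩ := h
      subst hi; subst hj
      exact ⟨hne, Or.inl hij⟩
    · obtain ⟨i, j, hi, hj, hij⟩ := h
      subst hi; subst hj
      exact ⟨hne, Or.inr hij⟩
  · rintro ⟨hne, h | h⟩
    · exact ⟨hne, Or.inl ⟨p, q, rfl, rfl, h⟩⟩
    · exact ⟨hne, Or.inr ⟨q, p, rfl, rfl, h⟩⟩

end Graphs

section Subsets

lemma card_coe_finset {α : Type} (S : Finset α) [Fintype ↥(↑S : Set α)] :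
    Fintype.card ↥(↑S : Set α) = S.card := by
  rw [Fintype.card_congr (Equiv.subtypeEquivRight (fun x => Finset.mem_coe))]
  exact Fintype.card_coe S

lemma induce_adj {α : Type} (G : SimpleGraph α) (s : Set α) (a b : ↥s) :
    (G.induce s).Adj a b ↔ G.Adj ↑a ↑b := SimpleGraph.comap_adj

lemma L1 (n : ℕ) (T : Finset (Fin n)) (hT : T.Nonempty) :
    Module.finrank ℚ
      (redHomology ((wheelGraph n).induce (↑(T.map (Fin.succEmb n)) : Set (Fin (n + 1)))) 0) =
    Module.finrank ℚ (redHomology ((cycleGraph n).induce (↑T : Set (Fin n))) 0) := by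
  set S := T.map (Fin.succEmb n) with hS
  have instF1 : Fintype ↥(↑S : Set (Fin (n + 1))) := Fintype.ofFinite _
  have instF2 : Fintype ↥(↑T : Set (Fin n)) := Fintype.ofFinite _
  have hne1 : Nonempty ↥(↑T : Set (Fin n)) := ⟨⟨hT.choose, hT.choose_spec⟩⟩
  have hne2 : Nonempty ↥(↑S : Set (Fin (n + 1))) :=
    ⟨⟨(hT.choose).succ, Finset.mem_coe.mpr (Finset.mem_map.mpr ⟨hT.choose, hT.choose_spec, rfl⟩)⟩⟩
  have h1 := finrank_formula ((wheelGraph n).induce (↑S : Set (Fin (n + 1))))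
  have h2 := finrank_formula ((cycleGraph n).induce (↑T : Set (Fin n)))
  have hr := finrank_range_bdry_eq ((wheelGraph n).induce (↑S : Set (Fin (n + 1))))
      ((cycleGraph n).induce (↑T : Set (Fin n)))
      (fun w => ⟨(w.1).succ, Finset.mem_coe.mpr (Finset.mem_map.mpr ⟨w.1, w.2, rfl⟩)⟩)
      (fun a b h => Subtype.ext ((Fin.succ_injective n) (congrArg Subtype.val h)))
      (fun a b => by
        rw [induce_adj, induce_adj]
        exact (wheel_adj_succ a.1 b.1).symm)
      (fun a b hne hnadj => by
        obtain ⟨wa, hwa, hsa⟩ := Finset.mem_map.mp (Finset.mem_coe.mp a.2)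
        obtain ⟨wb, hwb, hsb⟩ := Finset.mem_map.mp (Finset.mem_coe.mp b.2)
        exact ⟨⟨⟨wa, hwa⟩, Subtype.ext hsa⟩, ⟨⟨wb, hwb⟩, Subtype.ext hsb⟩⟩)
  rw [card_coe_finset] at h1 h2
  have hSc : S.card = T.card := by rw [hS, Finset.card_map]
  rw [hSc] at h1
  omega

lemma zero_not_mem_map_succ (n : ℕ) (T : Finset (Fin n)) :
    (0 : Fin (n + 1)) ∉ T.map (Fin.succEmb n) := by
  rw [Finset.mem_map]
  rintro ⟨w, hw, hsw⟩
  exact Fin.succ_ne_zero w hsw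

lemma L2 (n : ℕ) (T : Finset (Fin n)) (hT : T.Nonempty) :
    Module.finrank ℚ
      (redHomology ((wheelGraph n).induce
        (↑(insert 0 (T.map (Fin.succEmb n))) : Set (Fin (n + 1)))) 0) =
    Module.finrank ℚ (redHomology ((cycleGraph n).induce (↑T : Set (Fin n))) 0) + 1 := by
  set S := insert (0 : Fin (n + 1)) (T.map (Fin.succEmb n)) with hS
  have instF1 : Fintype ↥(↑S : Set (Fin (n + 1))) := Fintype.ofFinite _
  have instF2 : Fintype ↥(↑T : Set (Fin n)) := Fintype.ofFinite _
  have hne1 : Nonempty ↥(↑T : Set (Fin n)) := ⟨⟨hT.choose, hT.choose_spec⟩⟩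
  have hne2 : Nonempty ↥(↑S : Set (Fin (n + 1))) :=
    ⟨⟨0, Finset.mem_coe.mpr (Finset.mem_insert_self _ _)⟩⟩
  have hmem : ∀ w : ↥(↑T : Set (Fin n)), (w.1).succ ∈ S := fun w =>
    Finset.mem_insert_of_mem (Finset.mem_map.mpr ⟨w.1, w.2, rfl⟩)
  have h1 := finrank_formula ((wheelGraph n).induce (↑S : Set (Fin (n + 1))))
  have h2 := finrank_formula ((cycleGraph n).induce (↑T : Set (Fin n)))
  have hr := finrank_range_bdry_eq ((wheelGraph n).induce (↑S : Set (Fin (n + 1))))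
      ((cycleGraph n).induce (↑T : Set (Fin n)))
      (fun w => ⟨(w.1).succ, Finset.mem_coe.mpr (hmem w)⟩)
      (fun a b h => Subtype.ext ((Fin.succ_injective n) (congrArg Subtype.val h)))
      (fun a b => by
        rw [induce_adj, induce_adj]
        exact (wheel_adj_succ a.1 b.1).symm)
      (fun a b hne hnadj => by
        have hvne : a.1 ≠ b.1 := fun h => hne (Subtype.ext h)
        have ha0 : a.1 ≠ 0 := by
          rintro h0
          exact hnadj ((induce_adj _ _ a b).mpr (h0 ▸ wheel_adj_zero b.1 (h0 ▸ hvne).symm))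
        have hb0 : b.1 ≠ 0 := by
          rintro h0
          refine hnadj ((induce_adj _ _ a b).mpr ?_)
          exact ((h0 ▸ wheel_adj_zero a.1 (h0 ▸ hvne)).symm)
        have hma : a.1 ∈ T.map (Fin.succEmb n) := by
          rcases Finset.mem_insert.mp (Finset.mem_coe.mp a.2) with h | h
          · exact absurd h ha0
          · exact h
        have hmb : b.1 ∈ T.map (Fin.succEmb n) := by
          rcases Finset.mem_insert.mp (Finset.mem_coe.mp b.2) with h | h
          · exact absurd h hb0
          · exact h
        obtain ⟨wa, hwa, hsa⟩ := Finset.mem_map.mp hma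
        obtain ⟨wb, hwb, hsb⟩ := Finset.mem_map.mp hmb
        exact ⟨⟨⟨wa, hwa⟩, Subtype.ext hsa⟩, ⟨⟨wb, hwb⟩, Subtype.ext hsb⟩⟩)
  rw [card_coe_finset] at h1 h2
  have hSc : S.card = T.card + 1 := by
    rw [hS, Finset.card_insert_of_notMem (zero_not_mem_map_succ n T), Finset.card_map]
  rw [hSc] at h1
  omega

end Subsets

section Final

variable {n : ℕ}

/-- Predecessor map `Fin (n+1) → Fin n` (sends `0` to `0`). -/
def dmap (hn : 0 < n) : Fin (n + 1) → Fin n := fun x => ⟨x.val - 1, by omega⟩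

lemma dmap_succ (hn : 0 < n) (w : Fin n) : dmap hn w.succ = w := by
  apply Fin.ext
  simp [dmap]

lemma succ_dmap (hn : 0 < n) (x : Fin (n + 1)) (hx : x ≠ 0) : (dmap hn x).succ = x := by
  have hv : x.val ≠ 0 := fun h0 => hx (Fin.ext (by simp [h0]))
  apply Fin.ext
  simp only [Fin.val_succ, dmap]
  omega

lemma image_dmap_map (hn : 0 < n) (T : Finset (Fin n)) :
    (T.map (Fin.succEmb n)).image (dmap hn) = T := by
  ext w
  simp only [Finset.mem_image, Finset.mem_map]
  constructor
  · rintro ⟨x, ⟨u, hu, rfl⟩, rfl⟩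
    rw [show ((Fin.succEmb n) u) = u.succ from rfl, dmap_succ]
    exact hu
  · intro hw
    exact ⟨w.succ, ⟨w, hw, rfl⟩, dmap_succ hn w⟩

lemma map_image_dmap (hn : 0 < n) (S : Finset (Fin (n + 1))) (hS : (0 : Fin (n + 1)) ∉ S) :
    (S.image (dmap hn)).map (Fin.succEmb n) = S := by
  ext x
  simp only [Finset.mem_map, Finset.mem_image]
  constructor
  · rintro ⟨y, ⟨z, hz, rfl⟩, rfl⟩
    rw [show ((Fin.succEmb n) (dmap hn z)) = (dmap hn z).succ from rfl,
      succ_dmap hn z (fun h0 => hS (h0 ▸ hz))]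
    exact hz
  · intro hx
    exact ⟨dmap hn x, ⟨x, hx, rfl⟩, succ_dmap hn x (fun h0 => hS (h0 ▸ hx))⟩

lemma dmap_injOn (hn : 0 < n) (S : Finset (Fin (n + 1))) (hS : (0 : Fin (n + 1)) ∉ S) :
    Set.InjOn (dmap hn) ↑S := by
  intro x hx y hy hxy
  have hx0 : x ≠ 0 := fun h0 => hS (h0 ▸ Finset.mem_coe.mp hx)
  have hy0 : y ≠ 0 := fun h0 => hS (h0 ▸ Finset.mem_coe.mp hy)
  rw [← succ_dmap hn x hx0, ← succ_dmap hn y hy0, hxy]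

end Final

lemma bettiNumber_eq_sum {V : Type} [Fintype V] [DecidableEq V] [LinearOrder V]
    (G : SimpleGraph V) (i j k : ℕ) (h : j - i - 1 = k) :
    bettiNumber G i j = ∑ S ∈ Finset.univ.filter fun S : Finset V => S.card = j,
      Module.finrank ℚ (redHomology (G.induce (S : Set V)) k) := by
  subst h
  rfl

/-- The linear strand: `β_{i,i+1}(W_n) = β_{i,i+1}(C_n) + β_{i-1,i}(C_n) + C(n,i)`. -/
theorem betti_wheel_linear (n : ℕ) (hn : 3 ≤ n) (i : ℕ) (hi : 1 ≤ i) :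
    bettiNumber (wheelGraph n) i (i + 1) =
      bettiNumber (cycleGraph n) i (i + 1) + bettiNumber (cycleGraph n) (i - 1) i +
        n.choose i := by
  classical
  have hn0 : 0 < n := by omega
  rw [bettiNumber_eq_sum (wheelGraph n) i (i + 1) 0 (by omega),
    bettiNumber_eq_sum (cycleGraph n) i (i + 1) 0 (by omega),
    bettiNumber_eq_sum (cycleGraph n) (i - 1) i 0 (by omega)]
  set f : Finset (Fin (n + 1)) → ℕ := fun S =>
    Module.finrank ℚ (redHomology ((wheelGraph n).induce (↑S : Set (Fin (n + 1)))) 0) with hf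
  set g : Finset (Fin n) → ℕ := fun T =>
    Module.finrank ℚ (redHomology ((cycleGraph n).induce (↑T : Set (Fin n))) 0) with hg
  rw [← Finset.sum_filter_add_sum_filter_not
    (Finset.univ.filter fun S : Finset (Fin (n + 1)) => S.card = i + 1)
    (fun S => (0 : Fin (n + 1)) ∈ S) f]
  have hA : ∑ S ∈ (Finset.univ.filter fun S : Finset (Fin (n + 1)) => S.card = i + 1).filter
      (fun S => (0 : Fin (n + 1)) ∉ S), f S =
      ∑ T ∈ Finset.univ.filter fun T : Finset (Fin n) => T.card = i + 1, g T := by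
    apply Finset.sum_nbij' (fun S => S.image (dmap hn0)) (fun T => T.map (Fin.succEmb n))
    · intro S hS
      simp only [Finset.mem_filter, Finset.mem_univ, true_and] at hS ⊢
      rw [Finset.card_image_of_injOn (dmap_injOn hn0 S hS.2)]
      exact hS.1
    · intro T hT
      simp only [Finset.mem_filter, Finset.mem_univ, true_and] at hT ⊢
      exact ⟨by rw [Finset.card_map]; exact hT, zero_not_mem_map_succ n T⟩
    · intro S hS
      simp only [Finset.mem_filter] at hS
      exact map_image_dmap hn0 S hS.2
    · intro T hT
      exact image_dmap_map hn0 T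
    · intro S hS
      simp only [Finset.mem_filter, Finset.mem_univ, true_and] at hS
      obtain ⟨h1, h2⟩ := hS
      have hne : (S.image (dmap hn0)).Nonempty := by
        rw [Finset.image_nonempty]
        exact Finset.card_pos.mp (by omega)
      have := L1 n (S.image (dmap hn0)) hne
      rw [map_image_dmap hn0 S h2] at this
      exact this
  have hB : ∑ S ∈ (Finset.univ.filter fun S : Finset (Fin (n + 1)) => S.card = i + 1).filter
      (fun S => (0 : Fin (n + 1)) ∈ S), f S =
      ∑ T ∈ Finset.univ.filter fun T : Finset (Fin n) => T.card = i, (g T + 1) := by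
    apply Finset.sum_nbij' (fun S => (S.erase 0).image (dmap hn0))
      (fun T => insert 0 (T.map (Fin.succEmb n)))
    · intro S hS
      simp only [Finset.mem_filter, Finset.mem_univ, true_and] at hS ⊢
      obtain ⟨h1, h2⟩ := hS
      rw [Finset.card_image_of_injOn (dmap_injOn hn0 _ (Finset.notMem_erase 0 S))]
      rw [Finset.card_erase_of_mem h2, h1]
      omega
    · intro T hT
      simp only [Finset.mem_filter, Finset.mem_univ, true_and] at hT ⊢
      refine ⟨?_, Finset.mem_insert_self _ _⟩
      rw [Finset.card_insert_of_notMem (zero_not_mem_map_succ n T), Finset.card_map, hT]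
    · intro S hS
      simp only [Finset.mem_filter] at hS
      rw [map_image_dmap hn0 _ (Finset.notMem_erase 0 S), Finset.insert_erase hS.2]
    · intro T hT
      rw [Finset.erase_insert (zero_not_mem_map_succ n T), image_dmap_map hn0 T]
    · intro S hS
      simp only [Finset.mem_filter, Finset.mem_univ, true_and] at hS
      obtain ⟨h1, h2⟩ := hS
      have hne : ((S.erase 0).image (dmap hn0)).Nonempty := by
        rw [Finset.image_nonempty]
        apply Finset.card_pos.mp
        rw [Finset.card_erase_of_mem h2, h1]
        omega
      have := L2 n ((S.erase 0).image (dmap hn0)) hne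
      rw [map_image_dmap hn0 _ (Finset.notMem_erase 0 S), Finset.insert_erase h2] at this
      exact this
  rw [hA, hB, Finset.sum_add_distrib, Finset.sum_const, smul_eq_mul, mul_one]
  have hcard : (Finset.univ.filter fun T : Finset (Fin n) => T.card = i).card = n.choose i := by
    rw [← Finset.powerset_univ, ← Finset.powersetCard_eq_filter, Finset.card_powersetCard,
      Finset.card_univ, Fintype.card_fin]
  rw [hcard]
  ring
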